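/- Fix n ≥ 1. Let (B, E) be a complete shifted bipartition of {1, …, n}. Then J(B, E) is a maximal (for inclusion) adjacency-avoiding subset of I_n; i.e. J(B,E) is adjacency-avoiding and for every interval K ∈ I_n \ J(B,E), the set J(B,E) ∪ {K} is not adjacency-avoiding. -/
import Mathlib


/-- `K` is an interval of `{1, …, n}`: a set `⟦i,j⟧ = {i, i+1, …, j}` with `1 ≤ i ≤ j ≤ n`. -/
def IsInterval (n : ℕ) (K : Set ℕ) : Prop :=
  ∃ i j, 1 ≤ i ∧ i ≤ j ∧ j ≤ n ∧ K = Set.Icc i j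

/-- The lower bound `b(K)` of an interval `K`. -/
noncomputable def intB (K : Set ℕ) : ℕ := sInf K

/-- The upper bound `e(K)` of an interval `K`. -/
noncomputable def intE (K : Set ℕ) : ℕ := sSup K

/-- `J(B, E)`: the set of intervals `K` of `{1, …, n}` with `b(K) ∈ B` and `e(K) ∈ E`. -/
def intervalsOf (n : ℕ) (B E : Set ℕ) : Set (Set ℕ) :=
  {K | IsInterval n K ∧ intB K ∈ B ∧ intE K ∈ E}

/-- Two intervals `K`, `L` are adjacent if `b(K) = e(L) + 1` or `b(L) = e(K) + 1`. -/
def Adjacent (K L : Set ℕ) : Prop :=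
  intB K = intE L + 1 ∨ intB L = intE K + 1

/-- An interval set is adjacency-avoiding if it contains no pair of adjacent intervals. -/
def AdjAvoiding (J : Set (Set ℕ)) : Prop :=
  ∀ K ∈ J, ∀ L ∈ J, ¬ Adjacent K L

/-- The shift `A[1] = {a + 1 : a ∈ A}` of a set of integers. -/
def shiftSet (A : Set ℕ) : Set ℕ := (· + 1) '' A

lemma intB_Icc {i j : ℕ} (h : i ≤ j) : intB (Set.Icc i j) = i := by
  simp [intB, csInf_Icc h]

lemma intE_Icc {i j : ℕ} (h : i ≤ j) : intE (Set.Icc i j) = j := by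
  simp [intE, csSup_Icc h]

/-- If `(B, E)` is a complete shifted bipartition of `{1, …, n}`, then `J(B, E)` is a
maximal (for inclusion) adjacency-avoiding subset of `I_n`: it is adjacency-avoiding and
adding any interval not in it destroys the adjacency-avoiding property. -/
theorem complete_shifted_bipartition_maximal (n : ℕ) (hn : 1 ≤ n) (B E : Set ℕ)
    (hB : B ⊆ Set.Icc 1 n) (hE : E ⊆ Set.Icc 1 n)
    (hunion : B ∪ shiftSet E = Set.Icc 1 (n + 1)) (hdisj : B ∩ shiftSet E = ∅) :
    AdjAvoiding (intervalsOf n B E) ∧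
      ∀ K : Set ℕ, IsInterval n K → K ∉ intervalsOf n B E →
        ¬ AdjAvoiding (intervalsOf n B E ∪ {K}) := by
  have hone : (1 : ℕ) ∈ B := by
    have h1 : (1 : ℕ) ∈ B ∪ shiftSet E := by
      rw [hunion]; exact ⟨le_refl 1, by omega⟩
    rcases h1 with h | ⟨e, he, heq⟩
    · exact h
    · exfalso
      have heq' : e + 1 = 1 := heq
      have := (hE he).1; omega
  have hnE : n ∈ E := by
    have h1 : (n + 1) ∈ B ∪ shiftSet E := by
      rw [hunion]; exact ⟨by omega, le_refl _⟩
    rcases h1 with h | ⟨e, he, heq⟩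
    · exfalso; have := (hB h).2; omega
    · have heq' : e + 1 = n + 1 := heq
      have : e = n := by omega
      rwa [this] at he
  have key : ∀ K L, K ∈ intervalsOf n B E → L ∈ intervalsOf n B E → ¬ Adjacent K L := by
    rintro K L ⟨_, hbK, heK⟩ ⟨_, hbL, heL⟩ (h | h)
    · have : intB K ∈ B ∩ shiftSet E := ⟨hbK, ⟨intE L, heL, h.symm⟩⟩
      rw [hdisj] at this; exact this
    · have : intB L ∈ B ∩ shiftSet E := ⟨hbL, ⟨intE K, heK, h.symm⟩⟩
      rw [hdisj] at this; exact this
  refine ⟨fun K hK L hL => key K L hK hL, ?_⟩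
  rintro K ⟨i, j, hi1, hij, hjn, rfl⟩ hK hAA
  have hKmem : Set.Icc i j ∈ intervalsOf n B E ∪ {Set.Icc i j} := Or.inr rfl
  by_cases hiB : i ∈ B
  · -- then j ∉ E; use L = Icc (j+1) n
    have hjE : j ∉ E := fun hjE =>
      hK ⟨⟨i, j, hi1, hij, hjn, rfl⟩, by rwa [intB_Icc hij], by rwa [intE_Icc hij]⟩
    have hj1B : j + 1 ∈ B := by
      have h1 : (j + 1) ∈ B ∪ shiftSet E := by
        rw [hunion]; exact ⟨by omega, by omega⟩
      rcases h1 with h | ⟨e, he, heq⟩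
      · exact h
      · exfalso
        have heq' : e + 1 = j + 1 := heq
        have : e = j := by omega
        exact hjE (this ▸ he)
    have hj1n : j + 1 ≤ n := (hB hj1B).2
    have hL : Set.Icc (j+1) n ∈ intervalsOf n B E :=
      ⟨⟨j+1, n, by omega, hj1n, le_refl n, rfl⟩,
        by rwa [intB_Icc hj1n], by rwa [intE_Icc hj1n]⟩
    exact hAA _ (Or.inl hL) _ hKmem
      (Or.inl (by rw [intB_Icc hj1n, intE_Icc hij]))
  · -- i ∉ B, so i ∈ shiftSet E, i.e. i-1 ∈ E; use L = Icc 1 (i-1)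
    have h1 : i ∈ B ∪ shiftSet E := by
      rw [hunion]; exact ⟨hi1, by omega⟩
    rcases h1 with h | ⟨e, he, heq⟩
    · exact hiB h
    · have heq' : e + 1 = i := heq
      have he1 : 1 ≤ e := (hE he).1
      have hL : Set.Icc 1 e ∈ intervalsOf n B E :=
        ⟨⟨1, e, le_refl 1, he1, (hE he).2, rfl⟩,
          by rwa [intB_Icc he1], by rwa [intE_Icc he1]⟩
      exact hAA _ (Or.inr rfl) _ (Or.inl hL)
        (Or.inl (by rw [intB_Icc hij, intE_Icc he1]; omega))
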